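/- Monotone transformation invariance: if α : ℝ → ℝ is strictly increasing, then e(α(X); D, ℓ) = e(X; D, ℓ̃) where ℓ̃(x,c) := ℓ(α(x), c). If instead α is strictly decreasing and F_X is continuous, then e(α(X); D, ℓ) = e(X; D̃, ℓ̃), where D̃(t) = 1 − D(1−t). -/

import Mathlib

open MeasureTheory Set

lemma iio_toReal (μ : Measure ℝ) [IsProbabilityMeasure μ] (F : ℝ → ℝ)
    (hF : ∀ x, F x = (μ (Iic x)).toReal) (hFc : Continuous F) (x : ℝ) :
    (μ (Iio x)).toReal = F x := by
  have hU : (⋃ n : ℕ, Iic (x - 1/(n+1))) = Iio x := by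
    ext y
    simp only [mem_iUnion, mem_Iic, mem_Iio]
    constructor
    · rintro ⟨n, hn⟩
      have : (0:ℝ) < 1/(n+1) := by positivity
      linarith
    · intro hy
      obtain ⟨n, hn⟩ := exists_nat_one_div_lt (show (0:ℝ) < x - y by linarith)
      exact ⟨n, by linarith⟩
  have hmono : Monotone (fun n : ℕ => Iic (x - 1/(n+1))) := by
    intro m n hmn y hy
    simp only [mem_Iic] at *
    have h1 : 1/((n:ℝ)+1) ≤ 1/((m:ℝ)+1) := by
      apply one_div_le_one_div_of_le (by positivity)
      exact_mod_cast by omega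
    linarith
  have hT := tendsto_measure_iUnion_atTop (μ := μ) hmono
  rw [hU] at hT
  have hfin : μ (Iio x) ≠ ⊤ := (measure_lt_top μ _).ne
  have hT2 : Filter.Tendsto (fun n : ℕ => (μ (Iic (x - 1/(n+1)))).toReal)
      Filter.atTop (nhds ((μ (Iio x)).toReal)) :=
    (ENNReal.tendsto_toReal hfin).comp hT
  have hT3 : Filter.Tendsto (fun n : ℕ => F (x - 1/(n+1))) Filter.atTop (nhds (F x)) := by
    apply hFc.continuousAt.tendsto.comp
    have : Filter.Tendsto (fun n : ℕ => (1:ℝ)/(n+1)) Filter.atTop (nhds 0) :=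
      tendsto_one_div_add_atTop_nhds_zero_nat
    have := (tendsto_const_nhds (x := x)).sub this
    simpa using this
  have : ∀ n : ℕ, F (x - 1/(n+1)) = (μ (Iic (x - 1/(n+1)))).toReal := fun n => hF _
  rw [show (fun n : ℕ => F (x - 1/(n+1))) = (fun n : ℕ => (μ (Iic (x - 1/(n+1)))).toReal)
    from funext this] at hT3
  exact tendsto_nhds_unique hT2 hT3

/-- monotone transformation invariance: if `α` is strictly increasing,
then `c` minimizes the generalized-extremile objective of `α(X)` with `(D, ℓ)` iff it
minimizes the objective of `X` with `(D, ℓ̃)` where `ℓ̃(x,c) = ℓ(α(x),c)`; if `α` is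
strictly decreasing and `F_X` is continuous, the same holds with the dual distortion
`D̃` (density `t ↦ d(1−t)`) in place of `D`. -/
theorem stmt8 (μ : Measure ℝ) [IsProbabilityMeasure μ]
    (F Fα d : ℝ → ℝ) (ℓ : ℝ → ℝ → ℝ) (α : ℝ → ℝ)
    (hF : ∀ x, F x = (μ (Iic x)).toReal)
    (hFα : ∀ x, Fα x = ((Measure.map α μ) (Iic x)).toReal) :
    (StrictMono α →
      ∀ c : ℝ,
        IsMinOn (fun c => ∫ y, d (Fα y) * (ℓ y c - ℓ y 0) ∂(Measure.map α μ))
          Set.univ c ↔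
        IsMinOn (fun c => ∫ x, d (F x) * (ℓ (α x) c - ℓ (α x) 0) ∂μ) Set.univ c)
    ∧
    (StrictAnti α → Continuous F →
      ∀ c : ℝ,
        IsMinOn (fun c => ∫ y, d (Fα y) * (ℓ y c - ℓ y 0) ∂(Measure.map α μ))
          Set.univ c ↔
        IsMinOn (fun c => ∫ x, d (1 - F x) * (ℓ (α x) c - ℓ (α x) 0) ∂μ)
          Set.univ c) := by
  constructor
  · intro hα c
    have hmeas : Measurable α := hα.monotone.measurable
    have hemb : MeasurableEmbedding α := hmeas.measurableEmbedding hα.injective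
    have hFαα : ∀ x, Fα (α x) = F x := by
      intro x
      rw [hFα, hF, hemb.map_apply]
      congr 2
      ext y
      simp [hα.le_iff_le]
    have heq : (fun c => ∫ y, d (Fα y) * (ℓ y c - ℓ y 0) ∂(Measure.map α μ))
        = (fun c => ∫ x, d (F x) * (ℓ (α x) c - ℓ (α x) 0) ∂μ) := by
      funext c
      rw [hemb.integral_map]
      simp_rw [hFαα]
    rw [heq]
  · intro hα hFc c
    have hmeas : Measurable α := hα.antitone.measurable
    have hemb : MeasurableEmbedding α := hmeas.measurableEmbedding hα.injective
    have hFαα : ∀ x, Fα (α x) = 1 - F x := by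
      intro x
      rw [hFα, hemb.map_apply]
      have hset : α ⁻¹' Iic (α x) = Ici x := by
        ext y
        simp [hα.le_iff_ge]
      rw [hset]
      have hcompl : μ (Ici x) = 1 - μ (Iio x) := by
        rw [← compl_Iio, measure_compl measurableSet_Iio (measure_lt_top μ _).ne,
          measure_univ]
      rw [hcompl, ENNReal.toReal_sub_of_le (by
          rw [← measure_univ (μ := μ)]; exact measure_mono (subset_univ _)) (by simp),
        ENNReal.toReal_one, iio_toReal μ F hF hFc]
    have heq : (fun c => ∫ y, d (Fα y) * (ℓ y c - ℓ y 0) ∂(Measure.map α μ))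
        = (fun c => ∫ x, d (1 - F x) * (ℓ (α x) c - ℓ (α x) 0) ∂μ) := by
      funext c
      rw [hemb.integral_map]
      simp_rw [hFαα]
    rw [heq]
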